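/- Over a field of characteristic 3 with variables a₁₁, a₁₂, a₂₁, a₂₂, applying the differential operator (∂/∂a₁₁)² (∂/∂a₂₂)² to the rational function 1/(a₁₁a₂₂ − a₂₁a₁₂) yields 1/(a₁₁a₂₂ − a₂₁a₁₂)³. -/
import Mathlib


open MvPolynomial

set_option maxHeartbeats 1000000 in
/-- In the field of rational functions `F₃(a₁₁, a₁₂, a₂₁, a₂₂)` (realized as the fraction
field of the polynomial ring, with variables indexed by `(i,j) : Fin 2 × Fin 2`), applying
`(∂/∂a₁₁)² (∂/∂a₂₂)²` to `1/(a₁₁a₂₂ − a₂₁a₁₂)` yields `1/(a₁₁a₂₂ − a₂₁a₁₂)³`.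
The partial derivatives are formalized as derivations on the fraction field extending the
formal partial derivatives of polynomials. -/
theorem stmt_2 [Fact (Nat.Prime 3)]
    (D₁ D₂ : Derivation ℤ (FractionRing (MvPolynomial (Fin 2 × Fin 2) (ZMod 3)))
      (FractionRing (MvPolynomial (Fin 2 × Fin 2) (ZMod 3))))
    (hD₁ : ∀ f : MvPolynomial (Fin 2 × Fin 2) (ZMod 3),
      D₁ (algebraMap _ _ f) = algebraMap _ _ (pderiv ((0 : Fin 2), (0 : Fin 2)) f))
    (hD₂ : ∀ f : MvPolynomial (Fin 2 × Fin 2) (ZMod 3),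
      D₂ (algebraMap _ _ f) = algebraMap _ _ (pderiv ((1 : Fin 2), (1 : Fin 2)) f)) :
    D₁ (D₁ (D₂ (D₂ ((algebraMap (MvPolynomial (Fin 2 × Fin 2) (ZMod 3))
        (FractionRing (MvPolynomial (Fin 2 × Fin 2) (ZMod 3)))
        (X (0, 0) * X (1, 1) - X (1, 0) * X (0, 1)))⁻¹)))) =
      ((algebraMap (MvPolynomial (Fin 2 × Fin 2) (ZMod 3))
        (FractionRing (MvPolynomial (Fin 2 × Fin 2) (ZMod 3)))
        (X (0, 0) * X (1, 1) - X (1, 0) * X (0, 1)))⁻¹) ^ 3 := by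
  set K := FractionRing (MvPolynomial (Fin 2 × Fin 2) (ZMod 3)) with hK
  set φ := algebraMap (MvPolynomial (Fin 2 × Fin 2) (ZMod 3)) K with hφ
  set d : MvPolynomial (Fin 2 × Fin 2) (ZMod 3) :=
    X (0,0) * X (1,1) - X (1,0) * X (0,1) with hd
  set u : K := φ d with hu'
  set x : K := φ (X (0,0)) with hx'
  set y : K := φ (X (1,1)) with hy'
  have hdne : d ≠ 0 := by
    intro h
    have h2 := congrArg (eval (fun p => if p.1 = p.2 then (1:ZMod 3) else 0)) h
    simp [hd] at h2
  have hu : u ≠ 0 := by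
    intro h
    exact hdne (IsFractionRing.injective (MvPolynomial (Fin 2 × Fin 2) (ZMod 3)) K
      (by rw [← hu'] at *; rw [h, map_zero]))
  have h3 : (3:K) = 0 := by
    have hp : ((3:ℕ) : MvPolynomial (Fin 2 × Fin 2) (ZMod 3)) = 0 :=
      CharP.cast_eq_zero _ 3
    have := map_natCast φ 3
    rw [hp, map_zero] at this
    exact_mod_cast this.symm
  have hDu1 : D₁ u = y := by
    rw [hu', hD₁]; congr 1; simp [hd, pderiv_X]
  have hDu2 : D₂ u = x := by
    rw [hu', hD₂]; congr 1; simp [hd, pderiv_X]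
  have hDx1 : D₁ x = 1 := by rw [hx', hD₁]; simp [pderiv_X]
  have hDx2 : D₂ x = 0 := by rw [hx', hD₂]; simp [pderiv_X]
  have hinv1 : D₁ u⁻¹ = -(y * u⁻¹^2) := by
    rw [Derivation.leibniz_inv, hDu1, smul_eq_mul]; ring
  have hinv2 : D₂ u⁻¹ = -(x * u⁻¹^2) := by
    rw [Derivation.leibniz_inv, hDu2, smul_eq_mul]; ring
  have s2 : D₂ (D₂ u⁻¹) = 2 * x^2 * u⁻¹^3 := by
    rw [hinv2, map_neg, Derivation.leibniz, Derivation.leibniz_pow, hinv2, hDx2]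
    simp only [smul_eq_mul, nsmul_eq_mul]
    push_cast
    ring
  have t1 : D₁ (x^2 * u⁻¹^3) = 2*x*u⁻¹^3 - 3*(x^2*y*u⁻¹^4) := by
    rw [Derivation.leibniz, Derivation.leibniz_pow, Derivation.leibniz_pow, hDx1, hinv1]
    simp only [smul_eq_mul, nsmul_eq_mul]
    push_cast
    ring
  have s3 : D₁ (2 * x^2 * u⁻¹^3) = x * u⁻¹^3 := by
    rw [show (2:K) * x^2 * u⁻¹^3 = x^2 * u⁻¹^3 + x^2 * u⁻¹^3 by ring, map_add, t1]
    linear_combination (2*(x*u⁻¹^3) - 2*(x^2*y*u⁻¹^4) - x*u⁻¹^3 + x*u⁻¹^3) * h3 +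
      (x*u⁻¹^3 - 2*x^2*y*u⁻¹^4) * h3 - (2*(x*u⁻¹^3) - 2*(x^2*y*u⁻¹^4)) * h3
  have s4 : D₁ (x * u⁻¹^3) = u⁻¹^3 := by
    rw [Derivation.leibniz, Derivation.leibniz_pow, hDx1, hinv1]
    simp only [smul_eq_mul, nsmul_eq_mul]
    push_cast
    linear_combination (-(x*y*u⁻¹^4)) * h3
  rw [s2, s3, s4]
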